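/- For integers t ≥ 2, q a prime power, ψ a nontrivial additive character of F_q, and a ∈ F_q*, the Kloosterman sum for GL satisfies the recursion K_{GL(t,q)}(ψ;a) = q^{t−1} K_{GL(t−1,q)}(ψ;a) K(ψ;a) + q^{2t−2}(q^{t−1}−1) K_{GL(t−2,q)}(ψ;a), where K_{GL(t,q)}(ψ;a) = Σ_{w ∈ GL(t,q)} ψ(Tr w + a Tr w⁻¹) and K_{GL(0,q)}(ψ;a) = 1. -/

import Mathlib

open Finset
open scoped Classical
open Matrix

noncomputable instance (p n : ℕ) [Fact p.Prime] : Fintype (GaloisField p n) :=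
  Fintype.ofFinite _

/-- The Kloosterman sum for `GL(t,q)`:
`K_{GL(t,q)}(ψ;a) = Σ_{w ∈ GL(t,q)} ψ(Tr w + a Tr w⁻¹)`.
For `t = 0` the group is trivial and the sum is `ψ(0) = 1`. -/
noncomputable def KGL (p r : ℕ) [Fact p.Prime] (ψ : AddChar (GaloisField p r) ℂ)
    (t : ℕ) (a : GaloisField p r) : ℂ :=
  ∑ w : Matrix.GeneralLinearGroup (Fin t) (GaloisField p r),
    ψ ((w : Matrix (Fin t) (Fin t) (GaloisField p r)).trace +
      a * ((w⁻¹ : Matrix.GeneralLinearGroup (Fin t) (GaloisField p r)) :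
        Matrix (Fin t) (Fin t) (GaloisField p r)).trace)



variable {F : Type*} [Field F] [Fintype F] [DecidableEq F]

lemma char_sum_zero (ψ : AddChar F ℂ) (hψ : ψ ≠ 1) : ∑ x : F, ψ x = 0 :=
  AddChar.sum_eq_zero_iff_ne_zero.2 hψ

lemma char_sum_mul (ψ : AddChar F ℂ) (hψ : ψ ≠ 1) (c : F) :
    ∑ x : F, ψ (c * x) = if c = 0 then (Fintype.card F : ℂ) else 0 := by
  split_ifs with h
  · simp [h, AddChar.map_zero_eq_one, Finset.card_univ]
  · rw [← char_sum_zero ψ hψ]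
    exact Fintype.sum_equiv (Equiv.mulLeft₀ c h) _ _ fun x => rfl

lemma char_map_sum {ι : Type*} (ψ : AddChar F ℂ) (s : Finset ι) (f : ι → F) :
    ψ (∑ x ∈ s, f x) = ∏ x ∈ s, ψ (f x) := by
  classical
  induction s using Finset.cons_induction with
  | empty => simp
  | cons i s hi ih => rw [Finset.sum_cons, Finset.prod_cons, AddChar.map_add_eq_mul, ih]

lemma char_sum_vec {ι : Type*} [Fintype ι] [DecidableEq ι] (ψ : AddChar F ℂ) (hψ : ψ ≠ 1)
    (coef : ι → F) :
    ∑ v : ι → F, ψ (∑ x, coef x * v x) =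
      if ∀ x, coef x = 0 then ((Fintype.card F : ℂ)) ^ (Fintype.card ι) else 0 := by
  simp_rw [char_map_sum ψ]
  rw [← Fintype.piFinset_univ, ← Finset.prod_univ_sum (fun _ => (univ : Finset F)) (fun i y => ψ (coef i * y))]
  simp_rw [char_sum_mul ψ hψ]
  split_ifs with h
  · simp [h, Finset.card_univ]
  · push_neg at h
    obtain ⟨x, hx⟩ := h
    exact Finset.prod_eq_zero (Finset.mem_univ x) (by simp [hx])


variable {F : Type*} [Field F] [Fintype F] [DecidableEq F]

noncomputable def kk (ψ : AddChar F ℂ) (a : F) (ι : Type) [Fintype ι] [DecidableEq ι] : ℂ :=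
  ∑ g ∈ univ.filter (fun g : Matrix ι ι F => IsUnit g),
    ψ (g.trace + a * (g⁻¹).trace)


lemma trace_submatrix_equiv' {ι κ : Type} [Fintype ι] [Fintype κ] (e : κ ≃ ι)
    (A : Matrix ι ι F) : (A.submatrix e e).trace = A.trace := by
  simp only [Matrix.trace, Matrix.diag, Matrix.submatrix_apply]
  exact Fintype.sum_equiv e _ _ fun i => rfl

lemma kk_congr (ψ : AddChar F ℂ) (a : F) {ι κ : Type} [Fintype ι] [DecidableEq ι]
    [Fintype κ] [DecidableEq κ] (e : κ ≃ ι) : kk ψ a ι = kk ψ a κ := by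
  unfold kk
  refine Finset.sum_nbij' (fun g => g.submatrix e e) (fun g => g.submatrix e.symm e.symm)
    ?_ ?_ ?_ ?_ ?_
  · intro g hg
    simp only [Finset.mem_filter, Finset.mem_univ, true_and] at hg ⊢
    exact (Matrix.isUnit_submatrix_equiv e e).2 hg
  · intro g hg
    simp only [Finset.mem_filter, Finset.mem_univ, true_and] at hg ⊢
    exact (Matrix.isUnit_submatrix_equiv e.symm e.symm).2 hg
  · intro g _; ext i j; simp
  · intro g _; ext i j; simp
  · intro g _
    rw [Matrix.inv_submatrix_equiv, trace_submatrix_equiv', trace_submatrix_equiv']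


variable {κ' : Type} [Fintype κ'] [DecidableEq κ']

lemma blockUnit (A : Matrix κ' κ' F) (b : Matrix κ' Unit F) (d : F) :
    IsUnit (Matrix.fromBlocks A b 0 (d • (1 : Matrix Unit Unit F))) ↔ IsUnit A ∧ d ≠ 0 := by
  rw [Matrix.isUnit_iff_isUnit_det, Matrix.det_fromBlocks_zero₂₁, Matrix.isUnit_iff_isUnit_det,
    isUnit_iff_ne_zero, isUnit_iff_ne_zero]
  have : (d • (1 : Matrix Unit Unit F)).det = d := by simp
  rw [this, mul_ne_zero_iff]

lemma blockInv (A : Matrix κ' κ' F) (hA : IsUnit A) (b : Matrix κ' Unit F) (d : F)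
    (hd : d ≠ 0) :
    (Matrix.fromBlocks A b 0 (d • (1 : Matrix Unit Unit F)))⁻¹ =
      Matrix.fromBlocks A⁻¹ (-(d⁻¹ • (A⁻¹ * b))) 0 (d⁻¹ • (1 : Matrix Unit Unit F)) := by
  refine Matrix.inv_eq_right_inv ?_
  rw [Matrix.fromBlocks_multiply]
  have h1 : A * A⁻¹ = 1 := Matrix.mul_nonsing_inv A ((Matrix.isUnit_iff_isUnit_det A).1 hA)
  simp [Matrix.mul_smul, Matrix.smul_mul, h1, ← Matrix.mul_assoc, smul_smul,
    inv_mul_cancel₀ hd, ← Matrix.fromBlocks_one]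

lemma trace_fromBlocks' (A : Matrix κ' κ' F) (b : Matrix κ' Unit F) (c : Matrix Unit κ' F)
    (d : F) :
    (Matrix.fromBlocks A b c (d • (1 : Matrix Unit Unit F))).trace = A.trace + d := by
  simp [Matrix.trace, Matrix.diag, Fintype.sum_sum_type]

lemma decompose_small (g : Matrix (κ' ⊕ Unit) (κ' ⊕ Unit) F)
    (h : ∀ j, g (Sum.inr ()) (Sum.inl j) = 0) :
    g = Matrix.fromBlocks g.toBlocks₁₁ g.toBlocks₁₂ 0
      ((g (Sum.inr ()) (Sum.inr ())) • (1 : Matrix Unit Unit F)) := by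
  ext i j
  rcases i with i | ⟨⟩ <;> rcases j with j | ⟨⟩ <;>
    simp [Matrix.toBlocks₁₁, Matrix.toBlocks₁₂, h]

lemma card_colvec : Fintype.card (Matrix κ' Unit F) = Fintype.card F ^ Fintype.card κ' := by
  rw [show Fintype.card (Matrix κ' Unit F) = Fintype.card (κ' → Unit → F) from rfl]
  simp [Fintype.card_fun]

lemma smallCell (ψ : AddChar F ℂ) (a : F) :
    ∑ g ∈ univ.filter (fun g : Matrix (κ' ⊕ Unit) (κ' ⊕ Unit) F =>
        IsUnit g ∧ ∀ j, g (Sum.inr ()) (Sum.inl j) = 0),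
      ψ (g.trace + a * (g⁻¹).trace)
    = (Fintype.card F : ℂ) ^ (Fintype.card κ') * kk ψ a κ' *
        ∑ d ∈ (univ \ {0} : Finset F), ψ (d + a * d⁻¹) := by
  have hbij :
      ∑ g ∈ univ.filter (fun g : Matrix (κ' ⊕ Unit) (κ' ⊕ Unit) F =>
          IsUnit g ∧ ∀ j, g (Sum.inr ()) (Sum.inl j) = 0),
        ψ (g.trace + a * (g⁻¹).trace)
      = ∑ p ∈ (univ.filter (fun A : Matrix κ' κ' F => IsUnit A)) ×ˢ
            ((univ : Finset (Matrix κ' Unit F)) ×ˢ (univ \ {0} : Finset F)),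
          ψ (p.1.trace + a * (p.1⁻¹).trace) * ψ (p.2.2 + a * p.2.2⁻¹) := by
    refine Finset.sum_nbij'
      (fun g => (g.toBlocks₁₁, (g.toBlocks₁₂, g (Sum.inr ()) (Sum.inr ()))))
      (fun p => Matrix.fromBlocks p.1 p.2.1 0 (p.2.2 • (1 : Matrix Unit Unit F)))
      ?_ ?_ ?_ ?_ ?_
    · intro g hg
      simp only [Finset.mem_filter, Finset.mem_univ, true_and] at hg
      obtain ⟨hu, hz⟩ := hg
      rw [decompose_small g hz, blockUnit] at hu
      refine Finset.mem_product.2 ⟨?_, Finset.mem_product.2 ⟨Finset.mem_univ _, ?_⟩⟩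
      · simpa using hu.1
      · simpa using hu.2
    · intro p hp
      have h1 := (Finset.mem_product.1 hp).1
      have h2 := (Finset.mem_product.1 (Finset.mem_product.1 hp).2).2
      simp only [Finset.mem_filter, Finset.mem_univ, true_and] at h1
      simp only [Finset.mem_sdiff, Finset.mem_univ, Finset.mem_singleton, true_and] at h2
      simp only [Finset.mem_filter, Finset.mem_univ, true_and]
      constructor
      · exact (blockUnit _ _ _).2 ⟨h1, h2⟩
      · intro j; simp
    · intro g hg
      simp only [Finset.mem_filter, Finset.mem_univ, true_and] at hg
      exact (decompose_small g hg.2).symm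
    · intro p hp
      ext i j <;> simp [Matrix.toBlocks₁₁, Matrix.toBlocks₁₂]
    · intro g hg
      simp only [Finset.mem_filter, Finset.mem_univ, true_and] at hg
      obtain ⟨hu, hz⟩ := hg
      have hd := ((blockUnit _ _ _).1 ((decompose_small g hz) ▸ hu))
      rw [← AddChar.map_add_eq_mul]
      congr 1
      conv_lhs => rw [decompose_small g hz]
      rw [blockInv _ hd.1 _ _ hd.2, trace_fromBlocks', trace_fromBlocks']
      ring
  rw [hbij, Finset.sum_product]
  simp_rw [Finset.sum_product]
  rw [kk]
  simp_rw [← Finset.mul_sum, Finset.sum_const, Finset.card_univ, card_colvec, nsmul_eq_mul]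
  push_cast
  rw [← Finset.sum_mul]
  ring


variable {F : Type*} [Field F] [Fintype F] [DecidableEq F]
variable {κ' : Type} [Fintype κ'] [DecidableEq κ']

section norm
variable (c : κ' → F) (i₀ m' : κ')

noncomputable def Pm : Matrix κ' κ' F := (1 : Matrix κ' κ' F).submatrix id ⇑(Equiv.swap i₀ m')

noncomputable def Wm : Matrix κ' κ' F := Matrix.of fun k j =>
  if j = m' then (if k = m' then (c i₀)⁻¹ else 0)
  else ((if k = j then 1 else 0) - (if k = m' then c (Equiv.swap i₀ m' j) * (c i₀)⁻¹ else 0))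

noncomputable def Wm' : Matrix κ' κ' F := Matrix.of fun k j =>
  if j = m' then (if k = m' then c i₀ else 0)
  else ((if k = j then 1 else 0) + (if k = m' then c (Equiv.swap i₀ m' j) else 0))

lemma Pm_mul_Pm : (Pm i₀ m' : Matrix κ' κ' F) * Pm i₀ m' = 1 := by
  have h : (Pm i₀ m' : Matrix κ' κ' F) = (1 : Matrix κ' κ' F).submatrix ⇑(Equiv.swap i₀ m') id := by
    ext k j
    simp only [Pm, Matrix.submatrix_apply, Matrix.one_apply, id]
    by_cases h : k = Equiv.swap i₀ m' j
    · subst h; simp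
    · rw [if_neg h, if_neg]
      intro h2
      exact h (by rw [← h2, Equiv.swap_apply_self])
  nth_rewrite 2 [h]
  rw [show (Pm i₀ m' : Matrix κ' κ' F)
      = (1 : Matrix κ' κ' F).submatrix (⇑(Equiv.refl κ')) ⇑(Equiv.swap i₀ m') from rfl]
  rw [Matrix.submatrix_mul_equiv, one_mul]
  simp

lemma Wm_mul_Wm' (hc : c i₀ ≠ 0) : (Wm c i₀ m' : Matrix κ' κ' F) * Wm' c i₀ m' = 1 := by
  ext k j
  rw [Matrix.mul_apply]
  by_cases hj : j = m'
  · subst hj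
    have key : ∀ x, (Wm c i₀ j : Matrix κ' κ' F) k x * Wm' c i₀ j x j
        = if x = j then (Wm c i₀ j : Matrix κ' κ' F) k j * c i₀ else 0 := by
      intro x
      by_cases hx : x = j <;> simp [Wm, Wm', hx]
    simp_rw [key]
    rw [Finset.sum_ite_eq' univ j _]
    simp only [Finset.mem_univ, if_true, Wm, Matrix.of_apply, if_pos rfl, Matrix.one_apply]
    split_ifs with h <;> simp [h, inv_mul_cancel₀ hc]
  · have key : ∀ x, (Wm c i₀ m' : Matrix κ' κ' F) k x * Wm' c i₀ m' x j
        = (if x = j then (Wm c i₀ m' : Matrix κ' κ' F) k j else 0)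
          + (if x = m' then (Wm c i₀ m' : Matrix κ' κ' F) k m' * c (Equiv.swap i₀ m' j) else 0) := by
      intro x
      by_cases hx : x = j
      · subst hx
        simp [Wm', hj, if_neg hj]
      · by_cases hx2 : x = m'
        · subst hx2
          simp [Wm', hj, Ne.symm hx, mul_add, hx]
        · simp [Wm', hj, hx, hx2]
    simp_rw [key]
    rw [Finset.sum_add_distrib, Finset.sum_ite_eq' univ j _, Finset.sum_ite_eq' univ m' _]
    simp only [Finset.mem_univ, if_true]
    simp only [Wm, Matrix.of_apply, if_neg hj, if_pos rfl, Matrix.one_apply]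
    split_ifs with h1 h2 <;> field_simp <;> ring
end norm

section fiber
variable (ψ : AddChar F ℂ) (a : F)

noncomputable def sU (c : κ' → F) (i₀ m' : κ') : Matrix κ' κ' F := Pm i₀ m' * Wm c i₀ m'
noncomputable def sV (c : κ' → F) (i₀ m' : κ') : Matrix κ' κ' F := Wm' c i₀ m' * Pm i₀ m'

lemma sU_mul_sV (c : κ' → F) (i₀ m' : κ') (hc : c i₀ ≠ 0) :
    (sU c i₀ m' : Matrix κ' κ' F) * sV c i₀ m' = 1 := by
  rw [sU, sV, Matrix.mul_assoc, ← Matrix.mul_assoc (Wm c i₀ m'), Wm_mul_Wm' c i₀ m' hc,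
    one_mul, Pm_mul_Pm]

lemma isUnit_sU (c : κ' → F) (i₀ m' : κ') (hc : c i₀ ≠ 0) :
    IsUnit (sU c i₀ m' : Matrix κ' κ' F) := by
  rw [Matrix.isUnit_iff_isUnit_det]
  refine IsUnit.of_mul_eq_one (sV c i₀ m' : Matrix κ' κ' F).det ?_
  rw [← Matrix.det_mul, sU_mul_sV c i₀ m' hc, Matrix.det_one]

lemma vecMul_sU (c : κ' → F) (i₀ m' : κ') (hc : c i₀ ≠ 0) :
    c ᵥ* (sU c i₀ m' : Matrix κ' κ' F) = fun j => if j = m' then 1 else 0 := by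
  rw [sU, ← Matrix.vecMul_vecMul]
  have h1 : c ᵥ* (Pm i₀ m' : Matrix κ' κ' F) = c ∘ ⇑(Equiv.swap i₀ m') := by
    funext j
    simp only [Matrix.vecMul, dotProduct, Pm, Matrix.submatrix_apply, Matrix.one_apply, id,
      Function.comp]
    rw [Finset.sum_congr rfl (fun k _ => show c k * (if k = Equiv.swap i₀ m' j then (1:F) else 0)
      = if k = Equiv.swap i₀ m' j then c (Equiv.swap i₀ m' j) else 0 by
        by_cases h : k = Equiv.swap i₀ m' j <;> simp [h])]
    rw [Finset.sum_ite_eq' univ _ _]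
    simp
  rw [h1]
  funext j
  simp only [Matrix.vecMul, dotProduct, Function.comp, Wm, Matrix.of_apply]
  by_cases hj : j = m'
  · subst hj
    rw [Finset.sum_congr rfl (fun k _ => show
        c (Equiv.swap i₀ j k) * (if j = j then (if k = j then (c i₀)⁻¹ else 0) else _)
        = if k = j then c (Equiv.swap i₀ j j) * (c i₀)⁻¹ else 0 by
      by_cases h : k = j <;> simp [h])]
    rw [Finset.sum_ite_eq' univ _ _]
    simp [Equiv.swap_apply_right, inv_mul_cancel₀, hc, mul_inv_cancel₀]
  · rw [Finset.sum_congr rfl (fun k _ => show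
        c (Equiv.swap i₀ m' k) * (if j = m' then _ else ((if k = j then (1:F) else 0)
          - (if k = m' then c (Equiv.swap i₀ m' j) * (c i₀)⁻¹ else 0)))
        = (if k = j then c (Equiv.swap i₀ m' j) else 0)
          - (if k = m' then c (Equiv.swap i₀ m' m') * (c (Equiv.swap i₀ m' j) * (c i₀)⁻¹) else 0) by
      rw [if_neg hj]
      by_cases h : k = j
      · subst h
        simp [if_neg hj, mul_sub]
      · by_cases h2 : k = m'
        · subst h2
          simp [h, mul_sub]
        · simp [h, h2])]
    rw [Finset.sum_sub_distrib, Finset.sum_ite_eq' univ _ _, Finset.sum_ite_eq' univ _ _]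
    simp only [Finset.mem_univ, if_true, if_neg hj]
    rw [Equiv.swap_apply_right]
    field_simp
    ring

end fiber

section fiber2
variable (ψ : AddChar F ℂ) (a : F)

lemma conj_trace (s g : Matrix (κ' ⊕ Unit) (κ' ⊕ Unit) F) (hs : IsUnit s) :
    (s⁻¹ * g * s).trace = g.trace := by
  rw [Matrix.trace_mul_cycle, Matrix.mul_nonsing_inv s ((Matrix.isUnit_iff_isUnit_det s).1 hs),
    one_mul]

lemma conjInvM (s g : Matrix (κ' ⊕ Unit) (κ' ⊕ Unit) F) (hs : IsUnit s) :
    (s⁻¹ * g * s)⁻¹ = s⁻¹ * g⁻¹ * s := by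
  rw [Matrix.mul_inv_rev, Matrix.mul_inv_rev,
    Matrix.nonsing_inv_nonsing_inv s ((Matrix.isUnit_iff_isUnit_det s).1 hs),
    ← Matrix.mul_assoc]

noncomputable def sM (ρ : (κ' ⊕ Unit) → F) (i₀ m' : κ') : Matrix (κ' ⊕ Unit) (κ' ⊕ Unit) F :=
  Matrix.fromBlocks (sU (ρ ∘ Sum.inl) i₀ m')
    (Matrix.of fun x (_ : Unit) => if x = i₀ then -(ρ (Sum.inr ())) * (ρ (Sum.inl i₀))⁻¹ else 0) 0
    ((1:F) • (1 : Matrix Unit Unit F))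

variable (ρ : (κ' ⊕ Unit) → F) (i₀ m' : κ')

lemma isUnit_sM (hc : ρ (Sum.inl i₀) ≠ 0) : IsUnit (sM ρ i₀ m') :=
  (blockUnit _ _ _).2 ⟨isUnit_sU _ i₀ m' hc, one_ne_zero⟩

lemma sM_row : sM ρ i₀ m' (Sum.inr ()) = fun k => if k = Sum.inr () then (1:F) else 0 := by
  funext k
  rcases k with x | ⟨⟩ <;> simp [sM]

lemma sM_inv_row (hc : ρ (Sum.inl i₀) ≠ 0) :
    (sM ρ i₀ m')⁻¹ (Sum.inr ()) = fun k => if k = Sum.inr () then (1:F) else 0 := by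
  rw [sM, blockInv _ (isUnit_sU _ i₀ m' hc) _ _ one_ne_zero]
  funext k
  rcases k with x | ⟨⟩ <;> simp

lemma vecMul_sM (hc : ρ (Sum.inl i₀) ≠ 0) :
    ρ ᵥ* sM ρ i₀ m' = fun j => if j = Sum.inl m' then (1:F) else 0 := by
  funext j
  rcases j with j' | ⟨⟩
  · have : (ρ ᵥ* sM ρ i₀ m') (Sum.inl j') =
        ∑ x : κ', ρ (Sum.inl x) * sU (ρ ∘ Sum.inl) i₀ m' x j' +
          ∑ _u : Unit, ρ (Sum.inr ()) * 0 := by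
      rw [Matrix.vecMul, dotProduct, Fintype.sum_sum_type]
      rfl
    rw [this]
    have h2 := congrFun (vecMul_sU (ρ ∘ Sum.inl) i₀ m' hc) j'
    rw [Matrix.vecMul, dotProduct] at h2
    simp only [Function.comp] at h2 ⊢
    rw [h2]
    simp [Sum.inl.injEq]
  · have : (ρ ᵥ* sM ρ i₀ m') (Sum.inr ()) =
        ∑ x : κ', ρ (Sum.inl x) *
            (if x = i₀ then -(ρ (Sum.inr ())) * (ρ (Sum.inl i₀))⁻¹ else 0) +
          ∑ _u : Unit, ρ (Sum.inr ()) * 1 := by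
      rw [Matrix.vecMul, dotProduct, Fintype.sum_sum_type]
      simp [sM]
    rw [this]
    rw [Finset.sum_congr rfl (fun x _ => show ρ (Sum.inl x) *
        (if x = i₀ then -(ρ (Sum.inr ())) * (ρ (Sum.inl i₀))⁻¹ else 0)
        = if x = i₀ then ρ (Sum.inl i₀) * (-(ρ (Sum.inr ())) * (ρ (Sum.inl i₀))⁻¹) else 0 by
      by_cases h : x = i₀ <;> simp [h])]
    rw [Finset.sum_ite_eq' univ _ _]
    simp only [Finset.mem_univ, if_true]
    rw [if_neg Sum.inr_ne_inl]
    simp only [Finset.sum_const, Finset.card_univ, Fintype.card_unit, one_smul, mul_one]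
    field_simp
    ring

lemma fiberEq (hex : ∃ i₀, ρ (Sum.inl i₀) ≠ 0) :
    ∑ g ∈ univ.filter (fun g : Matrix (κ' ⊕ Unit) (κ' ⊕ Unit) F =>
        IsUnit g ∧ g (Sum.inr ()) = ρ), ψ (g.trace + a * (g⁻¹).trace)
    = ∑ g ∈ univ.filter (fun g : Matrix (κ' ⊕ Unit) (κ' ⊕ Unit) F =>
        IsUnit g ∧ g (Sum.inr ()) = fun j => if j = Sum.inl m' then 1 else 0),
      ψ (g.trace + a * (g⁻¹).trace) := by
  obtain ⟨i₀, hc⟩ := hex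
  set s := sM ρ i₀ m' with hsdef
  have hs : IsUnit s := isUnit_sM ρ i₀ m' hc
  have hdet : IsUnit s.det := (Matrix.isUnit_iff_isUnit_det s).1 hs
  have hss : s * s⁻¹ = 1 := Matrix.mul_nonsing_inv s hdet
  have hss' : s⁻¹ * s = 1 := Matrix.nonsing_inv_mul s hdet
  have hsinv : IsUnit s⁻¹ := by
    rw [Matrix.isUnit_iff_isUnit_det]
    exact IsUnit.of_mul_eq_one s.det (by rw [← Matrix.det_mul, hss', Matrix.det_one])
  have rowmul : ∀ (X Y : Matrix (κ' ⊕ Unit) (κ' ⊕ Unit) F) i, (X * Y) i = (X i) ᵥ* Y := by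
    intro X Y i; funext j; rw [Matrix.mul_apply]; rfl
  have evec : ∀ (Y : Matrix (κ' ⊕ Unit) (κ' ⊕ Unit) F),
      (fun k => if k = Sum.inr () then (1:F) else 0) ᵥ* Y = Y (Sum.inr ()) := by
    intro Y; funext j
    rw [Matrix.vecMul, dotProduct]
    rw [Finset.sum_congr rfl (fun k _ => show (if k = Sum.inr () then (1:F) else 0) * Y k j
      = if k = Sum.inr () then Y (Sum.inr ()) j else 0 by by_cases h : k = Sum.inr () <;> simp [h])]
    rw [Finset.sum_ite_eq' univ _ _]
    simp
  refine Finset.sum_nbij' (fun g => s⁻¹ * g * s) (fun g => s * g * s⁻¹) ?_ ?_ ?_ ?_ ?_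
  · intro g hg
    simp only [Finset.mem_filter, Finset.mem_univ, true_and] at hg ⊢
    refine ⟨(hsinv.mul hg.1).mul hs, ?_⟩
    rw [rowmul, rowmul, sM_inv_row ρ i₀ m' hc, evec, hg.2]
    exact vecMul_sM ρ i₀ m' hc
  · intro g hg
    simp only [Finset.mem_filter, Finset.mem_univ, true_and] at hg ⊢
    refine ⟨(hs.mul hg.1).mul hsinv, ?_⟩
    rw [rowmul, rowmul, hsdef, sM_row, evec, hg.2, ← vecMul_sM ρ i₀ m' hc, ← hsdef,
      Matrix.vecMul_vecMul, hss, Matrix.vecMul_one]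
  · intro g _
    show s * (s⁻¹ * g * s) * s⁻¹ = g
    rw [show s * (s⁻¹ * g * s) * s⁻¹ = (s * s⁻¹) * g * (s * s⁻¹) by noncomm_ring, hss]
    rw [one_mul, mul_one]
  · intro g _
    show s⁻¹ * (s * g * s⁻¹) * s = g
    rw [show s⁻¹ * (s * g * s⁻¹) * s = (s⁻¹ * s) * g * (s⁻¹ * s) by noncomm_ring, hss']
    rw [one_mul, mul_one]
  · intro g _
    rw [conj_trace _ _ hs, conjInvM _ _ hs, conj_trace _ _ hs]
end fiber2

section Tcomp
variable {κ : Type} [Fintype κ] [DecidableEq κ]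

/-- abbreviation for the swap of the two distinguished indices -/
noncomputable def σκ : Equiv.Perm ((κ ⊕ Unit) ⊕ Unit) :=
  Equiv.swap (Sum.inl (Sum.inr ())) (Sum.inr ())

lemma σκ_fix (j : κ) : (σκ : Equiv.Perm ((κ ⊕ Unit) ⊕ Unit)) (Sum.inl (Sum.inl j))
    = Sum.inl (Sum.inl j) :=
  Equiv.swap_apply_of_ne_of_ne (by simp) (by simp)

lemma σκ_m (u : Unit) : (σκ : Equiv.Perm ((κ ⊕ Unit) ⊕ Unit)) (Sum.inl (Sum.inr u)) = Sum.inr () := by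
  cases u; exact Equiv.swap_apply_left _ _

lemma σκ_l (u : Unit) : (σκ : Equiv.Perm ((κ ⊕ Unit) ⊕ Unit)) (Sum.inr u) = Sum.inl (Sum.inr ()) := by
  cases u; exact Equiv.swap_apply_right _ _

noncomputable def Qm (M : Matrix (κ ⊕ Unit) (κ ⊕ Unit) F) (ww : (κ ⊕ Unit) → F) :
    Matrix ((κ ⊕ Unit) ⊕ Unit) ((κ ⊕ Unit) ⊕ Unit) F :=
  (Matrix.fromBlocks M (Matrix.of fun x (_ : Unit) => ww x) 0 1).submatrix
    ⇑(Equiv.refl ((κ ⊕ Unit) ⊕ Unit)) ⇑(σκ : Equiv.Perm ((κ ⊕ Unit) ⊕ Unit))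

noncomputable def Qminv (M : Matrix (κ ⊕ Unit) (κ ⊕ Unit) F) (ww : (κ ⊕ Unit) → F) :
    Matrix ((κ ⊕ Unit) ⊕ Unit) ((κ ⊕ Unit) ⊕ Unit) F :=
  (Matrix.fromBlocks M⁻¹ (-(M⁻¹ * Matrix.of fun x (_ : Unit) => ww x)) 0 1).submatrix
    ⇑(σκ : Equiv.Perm ((κ ⊕ Unit) ⊕ Unit)) ⇑(Equiv.refl ((κ ⊕ Unit) ⊕ Unit))

lemma Qm_mul_Qminv (M : Matrix (κ ⊕ Unit) (κ ⊕ Unit) F) (hM : IsUnit M) (ww : (κ ⊕ Unit) → F) :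
    (Qm M ww : Matrix ((κ ⊕ Unit) ⊕ Unit) ((κ ⊕ Unit) ⊕ Unit) F) * Qminv M ww = 1 := by
  rw [Qm, Qminv, Matrix.submatrix_mul_equiv, Matrix.fromBlocks_multiply]
  have h1 : M * M⁻¹ = 1 := Matrix.mul_nonsing_inv M ((Matrix.isUnit_iff_isUnit_det M).1 hM)
  have h2 : M * -(M⁻¹ * (Matrix.of fun x (_ : Unit) => ww x))
      + (Matrix.of fun x (_ : Unit) => ww x) * (1 : Matrix Unit Unit F) = 0 := by
    rw [Matrix.mul_neg, ← Matrix.mul_assoc, h1, Matrix.one_mul, Matrix.mul_one, neg_add_cancel]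
  rw [h2]
  simp only [Matrix.mul_zero, Matrix.zero_mul, add_zero, zero_add, Matrix.mul_one, h1]
  rw [show (Matrix.fromBlocks (1 : Matrix (κ ⊕ Unit) (κ ⊕ Unit) F) 0 0
    (1 : Matrix Unit Unit F)) = 1 from Matrix.fromBlocks_one]
  simp

lemma Qminv_mul_Qm (M : Matrix (κ ⊕ Unit) (κ ⊕ Unit) F) (hM : IsUnit M) (ww : (κ ⊕ Unit) → F) :
    (Qminv M ww : Matrix ((κ ⊕ Unit) ⊕ Unit) ((κ ⊕ Unit) ⊕ Unit) F) * Qm M ww = 1 := by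
  rw [Qm, Qminv, Matrix.submatrix_mul_equiv, Matrix.fromBlocks_multiply]
  have h1 : M⁻¹ * M = 1 := Matrix.nonsing_inv_mul M ((Matrix.isUnit_iff_isUnit_det M).1 hM)
  have h2 : M⁻¹ * Matrix.of (fun x (_ : Unit) => ww x)
      + -(M⁻¹ * Matrix.of fun x (_ : Unit) => ww x) * (1 : Matrix Unit Unit F) = 0 := by
    rw [Matrix.mul_one, add_neg_cancel]
  rw [h2]
  simp only [Matrix.mul_zero, Matrix.zero_mul, add_zero, zero_add, Matrix.mul_one, h1]
  rw [show (Matrix.fromBlocks (1 : Matrix (κ ⊕ Unit) (κ ⊕ Unit) F) 0 0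
    (1 : Matrix Unit Unit F)) = 1 from Matrix.fromBlocks_one, Matrix.submatrix_one_equiv]

lemma Qm_inv (M : Matrix (κ ⊕ Unit) (κ ⊕ Unit) F) (hM : IsUnit M) (ww : (κ ⊕ Unit) → F) :
    (Qm M ww : Matrix ((κ ⊕ Unit) ⊕ Unit) ((κ ⊕ Unit) ⊕ Unit) F)⁻¹ = Qminv M ww :=
  Matrix.inv_eq_right_inv (Qm_mul_Qminv M hM ww)

lemma isUnit_Qm_iff (M : Matrix (κ ⊕ Unit) (κ ⊕ Unit) F) (ww : (κ ⊕ Unit) → F) :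
    IsUnit (Qm M ww : Matrix ((κ ⊕ Unit) ⊕ Unit) ((κ ⊕ Unit) ⊕ Unit) F) ↔ IsUnit M := by
  rw [Qm, Matrix.isUnit_submatrix_equiv, Matrix.isUnit_iff_isUnit_det,
    Matrix.det_fromBlocks_zero₂₁, Matrix.det_one, mul_one, Matrix.isUnit_iff_isUnit_det]

lemma Qm_row (M : Matrix (κ ⊕ Unit) (κ ⊕ Unit) F) (ww : (κ ⊕ Unit) → F) :
    (Qm M ww : Matrix ((κ ⊕ Unit) ⊕ Unit) ((κ ⊕ Unit) ⊕ Unit) F) (Sum.inr ())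
      = fun j => if j = Sum.inl (Sum.inr ()) then 1 else 0 := by
  funext j
  rcases j with (j | ⟨⟩) | ⟨⟩
  · rw [show (Qm M ww : Matrix ((κ ⊕ Unit) ⊕ Unit) ((κ ⊕ Unit) ⊕ Unit) F) (Sum.inr ())
        (Sum.inl (Sum.inl j)) = _ from congrFun rfl _, Qm]
    simp [σκ_fix, if_neg]
  · simp [Qm, σκ_m]
  · simp only [Qm, Matrix.submatrix_apply, σκ_l, Equiv.coe_refl, id]
    rw [if_neg Sum.inr_ne_inl]
    simp

lemma trace_Qm (M : Matrix (κ ⊕ Unit) (κ ⊕ Unit) F) (ww : (κ ⊕ Unit) → F) :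
    (Qm M ww : Matrix ((κ ⊕ Unit) ⊕ Unit) ((κ ⊕ Unit) ⊕ Unit) F).trace
      = (∑ j : κ, M (Sum.inl j) (Sum.inl j)) + ww (Sum.inr ()) := by
  rw [Matrix.trace]
  rw [show (∑ i, (Qm M ww : Matrix ((κ ⊕ Unit) ⊕ Unit) ((κ ⊕ Unit) ⊕ Unit) F).diag i)
    = ∑ i : (κ ⊕ Unit) ⊕ Unit, Qm M ww i i from rfl]
  rw [Fintype.sum_sum_type, Fintype.sum_sum_type]
  simp [Qm, σκ_fix, σκ_m, σκ_l]

lemma trace_Qm_inv (M : Matrix (κ ⊕ Unit) (κ ⊕ Unit) F) (hM : IsUnit M) (ww : (κ ⊕ Unit) → F) :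
    ((Qm M ww : Matrix ((κ ⊕ Unit) ⊕ Unit) ((κ ⊕ Unit) ⊕ Unit) F)⁻¹).trace
      = (∑ j : κ, M⁻¹ (Sum.inl j) (Sum.inl j)) - ∑ x : κ ⊕ Unit, M⁻¹ (Sum.inr ()) x * ww x := by
  rw [Qm_inv M hM ww, Matrix.trace]
  rw [show (∑ i, (Qminv M ww : Matrix ((κ ⊕ Unit) ⊕ Unit) ((κ ⊕ Unit) ⊕ Unit) F).diag i)
    = ∑ i : (κ ⊕ Unit) ⊕ Unit, Qminv M ww i i from rfl]
  rw [Fintype.sum_sum_type, Fintype.sum_sum_type]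
  simp [Qminv, σκ_fix, σκ_m, σκ_l, Matrix.mul_apply, sub_eq_add_neg, Fintype.sum_sum_type]
end Tcomp

section fib0
variable {κ : Type} [Fintype κ] [DecidableEq κ]

lemma decompose_Qm (g : Matrix ((κ ⊕ Unit) ⊕ Unit) ((κ ⊕ Unit) ⊕ Unit) F)
    (hrow : g (Sum.inr ()) = fun j => if j = Sum.inl (Sum.inr ()) then 1 else 0) :
    g = Qm (Matrix.of fun i j => g (Sum.inl i) ((σκ : Equiv.Perm ((κ ⊕ Unit) ⊕ Unit)) (Sum.inl j)))
        (fun x => g (Sum.inl x) ((σκ : Equiv.Perm ((κ ⊕ Unit) ⊕ Unit)) (Sum.inr ()))) := by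
  have hr : ∀ (u : Unit) j, g (Sum.inr u) j = if j = Sum.inl (Sum.inr ()) then 1 else 0 :=
    fun u j => by cases u; exact congrFun hrow j
  ext i j
  rcases i with i' | u
  · rcases j with (j₀ | u') | u'
    · simp [Qm, σκ_fix]
    · cases u'
      simp [Qm, σκ_m, σκ_l]
    · cases u'
      simp [Qm, σκ_m, σκ_l]
  · rcases j with (j₀ | u') | u'
    · rw [show g (Sum.inr u) (Sum.inl (Sum.inl j₀)) = 0 from (hr u _).trans (by simp)]
      simp [Qm, σκ_fix]
    · cases u'
      rw [show g (Sum.inr u) (Sum.inl (Sum.inr ())) = 1 from (hr u _).trans (by simp)]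
      simp [Qm, σκ_m]
    · cases u'
      rw [show g (Sum.inr u) (Sum.inr ()) = 0 from (hr u _).trans (by rw [if_neg Sum.inr_ne_inl])]
      simp [Qm, σκ_l]

lemma cond_iff_row (a : F) (ha : a ≠ 0) (M : Matrix (κ ⊕ Unit) (κ ⊕ Unit) F) (hM : IsUnit M) :
    (∀ x : κ ⊕ Unit, (if x = Sum.inr () then (1:F) else 0) - a * M⁻¹ (Sum.inr ()) x = 0)
    ↔ (∀ j, M (Sum.inr ()) j = if j = Sum.inr () then a else 0) := by
  have hdet := (Matrix.isUnit_iff_isUnit_det M).1 hM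
  have h1 : M⁻¹ * M = 1 := Matrix.nonsing_inv_mul M hdet
  have h2 : M * M⁻¹ = 1 := Matrix.mul_nonsing_inv M hdet
  constructor
  · intro h j
    have hx : ∀ x, M⁻¹ (Sum.inr ()) x = a⁻¹ * (if x = Sum.inr () then 1 else 0) := by
      intro x
      have hthis := h x
      have h9 : a * M⁻¹ (Sum.inr ()) x = (if x = Sum.inr () then 1 else 0) := by
        linear_combination -hthis
      rw [← h9]
      field_simp
    have := congrFun (congrFun h1 (Sum.inr ())) j
    rw [Matrix.mul_apply] at this
    rw [Finset.sum_congr rfl (fun x _ => show M⁻¹ (Sum.inr ()) x * M x j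
        = if x = Sum.inr () then a⁻¹ * M (Sum.inr ()) j else 0 by
      rw [hx x]; by_cases hxx : x = Sum.inr () <;> simp [hxx])] at this
    rw [Finset.sum_ite_eq' univ _ _] at this
    simp only [Finset.mem_univ, if_true] at this
    rw [Matrix.one_apply] at this
    by_cases hj : j = Sum.inr ()
    · subst hj
      rw [if_pos rfl] at this ⊢
      field_simp at this
      exact this
    · rw [if_neg (fun hh => hj hh.symm)] at this
      rw [if_neg hj]
      field_simp at this
      simpa using this
  · intro h x
    have := congrFun (congrFun h2 (Sum.inr ())) x
    rw [Matrix.mul_apply] at this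
    rw [Finset.sum_congr rfl (fun y _ => show M (Sum.inr ()) y * M⁻¹ y x
        = if y = Sum.inr () then a * M⁻¹ (Sum.inr ()) x else 0 by
      rw [h y]; by_cases hy : y = Sum.inr () <;> simp [hy])] at this
    rw [Finset.sum_ite_eq' univ _ _] at this
    simp only [Finset.mem_univ, if_true, Matrix.one_apply] at this
    rw [this]
    by_cases hx : x = Sum.inr () <;> simp [hx, eq_comm]
end fib0

section fib0b
variable {κ : Type} [Fintype κ] [DecidableEq κ]

lemma stepD (ψ : AddChar F ℂ) (a : F) (ha : a ≠ 0) :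
    ∑ M ∈ univ.filter (fun M : Matrix (κ ⊕ Unit) (κ ⊕ Unit) F =>
        IsUnit M ∧ ∀ j, M (Sum.inr ()) j = if j = Sum.inr () then a else 0),
      ψ ((∑ j : κ, M (Sum.inl j) (Sum.inl j)) + a * ∑ j : κ, M⁻¹ (Sum.inl j) (Sum.inl j))
    = (Fintype.card F : ℂ) ^ (Fintype.card κ) * kk ψ a κ := by
  have hbij : ∑ M ∈ univ.filter (fun M : Matrix (κ ⊕ Unit) (κ ⊕ Unit) F =>
        IsUnit M ∧ ∀ j, M (Sum.inr ()) j = if j = Sum.inr () then a else 0),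
      ψ ((∑ j : κ, M (Sum.inl j) (Sum.inl j)) + a * ∑ j : κ, M⁻¹ (Sum.inl j) (Sum.inl j))
      = ∑ p ∈ (univ.filter (fun B : Matrix κ κ F => IsUnit B)) ×ˢ
          (univ : Finset (Matrix κ Unit F)),
        ψ (p.1.trace + a * (p.1⁻¹).trace) := by
    refine Finset.sum_nbij' (fun M => (M.toBlocks₁₁, M.toBlocks₁₂))
      (fun p => Matrix.fromBlocks p.1 p.2 0 (a • (1 : Matrix Unit Unit F))) ?_ ?_ ?_ ?_ ?_
    · intro M hM
      simp only [Finset.mem_filter, Finset.mem_univ, true_and] at hM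
      obtain ⟨hu, hrow⟩ := hM
      have h0 : ∀ j, M (Sum.inr ()) (Sum.inl j) = 0 :=
        fun j => (hrow (Sum.inl j)).trans (if_neg Sum.inl_ne_inr)
      have hd : M (Sum.inr ()) (Sum.inr ()) = a := (hrow (Sum.inr ())).trans (if_pos rfl)
      rw [decompose_small M h0, hd, blockUnit] at hu
      exact Finset.mem_product.2 ⟨by simpa using hu.1, Finset.mem_univ _⟩
    · intro p hp
      have h1 := (Finset.mem_product.1 hp).1
      simp only [Finset.mem_filter, Finset.mem_univ, true_and] at h1 ⊢
      refine ⟨(blockUnit _ _ _).2 ⟨h1, ha⟩, ?_⟩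
      intro j
      rcases j with j | ⟨⟩ <;> simp
    · intro M hM
      simp only [Finset.mem_filter, Finset.mem_univ, true_and] at hM
      obtain ⟨hu, hrow⟩ := hM
      have h0 : ∀ j, M (Sum.inr ()) (Sum.inl j) = 0 :=
        fun j => (hrow (Sum.inl j)).trans (if_neg Sum.inl_ne_inr)
      have hd : M (Sum.inr ()) (Sum.inr ()) = a := (hrow (Sum.inr ())).trans (if_pos rfl)
      rw [← hd]
      exact (decompose_small M h0).symm
    · intro p hp
      ext i j <;> simp [Matrix.toBlocks₁₁, Matrix.toBlocks₁₂]
    · intro M hM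
      simp only [Finset.mem_filter, Finset.mem_univ, true_and] at hM
      obtain ⟨hu, hrow⟩ := hM
      have h0 : ∀ j, M (Sum.inr ()) (Sum.inl j) = 0 :=
        fun j => (hrow (Sum.inl j)).trans (if_neg Sum.inl_ne_inr)
      have hd : M (Sum.inr ()) (Sum.inr ()) = a := (hrow (Sum.inr ())).trans (if_pos rfl)
      have hdec : M = Matrix.fromBlocks M.toBlocks₁₁ M.toBlocks₁₂ 0
          (a • (1 : Matrix Unit Unit F)) := by rw [← hd]; exact decompose_small M h0
      have hB : IsUnit M.toBlocks₁₁ := by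
        rw [hdec, blockUnit] at hu; exact hu.1
      congr 1
      have hMinv : M⁻¹ = Matrix.fromBlocks M.toBlocks₁₁⁻¹
          (-(a⁻¹ • (M.toBlocks₁₁⁻¹ * M.toBlocks₁₂))) 0 (a⁻¹ • (1 : Matrix Unit Unit F)) := by
        conv_lhs => rw [hdec]
        exact blockInv _ hB _ _ ha
      have e1 : (∑ j : κ, M (Sum.inl j) (Sum.inl j)) = M.toBlocks₁₁.trace := by
        rw [Matrix.trace]
        exact Finset.sum_congr rfl fun j _ => rfl
      have e2 : (∑ j : κ, M⁻¹ (Sum.inl j) (Sum.inl j)) = (M.toBlocks₁₁⁻¹).trace := by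
        rw [Matrix.trace]
        refine Finset.sum_congr rfl fun j _ => ?_
        rw [hMinv]
        rfl
      rw [e1, e2]
  rw [hbij, Finset.sum_product]
  simp_rw [Finset.sum_const, Finset.card_univ, card_colvec, nsmul_eq_mul]
  push_cast
  rw [← Finset.mul_sum, kk]

lemma fib0 (ψ : AddChar F ℂ) (hψ : ψ ≠ 1) (a : F) (ha : a ≠ 0) :
    ∑ g ∈ univ.filter (fun g : Matrix ((κ ⊕ Unit) ⊕ Unit) ((κ ⊕ Unit) ⊕ Unit) F =>
        IsUnit g ∧ g (Sum.inr ()) = fun j => if j = Sum.inl (Sum.inr ()) then 1 else 0),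
      ψ (g.trace + a * (g⁻¹).trace)
    = (Fintype.card F : ℂ) ^ (Fintype.card κ + 1) *
        ((Fintype.card F : ℂ) ^ (Fintype.card κ) * kk ψ a κ) := by
  have stepA : ∑ g ∈ univ.filter (fun g : Matrix ((κ ⊕ Unit) ⊕ Unit) ((κ ⊕ Unit) ⊕ Unit) F =>
        IsUnit g ∧ g (Sum.inr ()) = fun j => if j = Sum.inl (Sum.inr ()) then 1 else 0),
      ψ (g.trace + a * (g⁻¹).trace)
      = ∑ p ∈ (univ.filter (fun M : Matrix (κ ⊕ Unit) (κ ⊕ Unit) F => IsUnit M)) ×ˢ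
          (univ : Finset ((κ ⊕ Unit) → F)),
        ψ ((∑ j : κ, p.1 (Sum.inl j) (Sum.inl j)) + a * ∑ j : κ, p.1⁻¹ (Sum.inl j) (Sum.inl j)) *
          ψ (∑ x : κ ⊕ Unit,
            ((if x = Sum.inr () then 1 else 0) - a * p.1⁻¹ (Sum.inr ()) x) * p.2 x) := by
    refine Finset.sum_nbij'
      (fun g => ((Matrix.of fun i j => g (Sum.inl i)
          ((σκ : Equiv.Perm ((κ ⊕ Unit) ⊕ Unit)) (Sum.inl j))),
        (fun x => g (Sum.inl x) ((σκ : Equiv.Perm ((κ ⊕ Unit) ⊕ Unit)) (Sum.inr ())))))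
      (fun p => Qm p.1 p.2) ?_ ?_ ?_ ?_ ?_
    · intro g hg
      simp only [Finset.mem_filter, Finset.mem_univ, true_and] at hg
      refine Finset.mem_product.2 ⟨?_, Finset.mem_univ _⟩
      simp only [Finset.mem_filter, Finset.mem_univ, true_and]
      rw [← isUnit_Qm_iff _ (fun x => g (Sum.inl x)
        ((σκ : Equiv.Perm ((κ ⊕ Unit) ⊕ Unit)) (Sum.inr ()))), ← decompose_Qm g hg.2]
      exact hg.1
    · intro p hp
      have h1 := (Finset.mem_product.1 hp).1
      simp only [Finset.mem_filter, Finset.mem_univ, true_and] at h1 ⊢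
      exact ⟨(isUnit_Qm_iff _ _).2 h1, Qm_row _ _⟩
    · intro g hg
      simp only [Finset.mem_filter, Finset.mem_univ, true_and] at hg
      exact (decompose_Qm g hg.2).symm
    · intro p hp
      refine Prod.ext ?_ ?_
      · ext i j
        simp [Qm, σκ, Equiv.swap_apply_self]
      · funext x
        simp [Qm, σκ, Equiv.swap_apply_self]
    · intro g hg
      simp only [Finset.mem_filter, Finset.mem_univ, true_and] at hg
      have hM : IsUnit (Matrix.of fun i j => g (Sum.inl i)
          ((σκ : Equiv.Perm ((κ ⊕ Unit) ⊕ Unit)) (Sum.inl j))) := by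
        rw [← isUnit_Qm_iff _ (fun x => g (Sum.inl x)
          ((σκ : Equiv.Perm ((κ ⊕ Unit) ⊕ Unit)) (Sum.inr ()))), ← decompose_Qm g hg.2]
        exact hg.1
      conv_lhs => rw [decompose_Qm g hg.2]
      rw [trace_Qm, trace_Qm_inv _ hM _, ← AddChar.map_add_eq_mul]
      congr 1
      have hexp : ∀ (N : Matrix (κ ⊕ Unit) (κ ⊕ Unit) F) (ww : (κ ⊕ Unit) → F),
          ∑ x : κ ⊕ Unit, ((if x = Sum.inr () then 1 else 0) - a * N (Sum.inr ()) x) * ww x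
          = ww (Sum.inr ()) - a * ∑ x : κ ⊕ Unit, N (Sum.inr ()) x * ww x := by
        intro N ww
        simp_rw [sub_mul]
        rw [Finset.sum_sub_distrib]
        congr 1
        · rw [Finset.sum_congr rfl (fun x _ => show
              (if x = Sum.inr () then (1:F) else 0) * ww x = if x = Sum.inr () then ww x else 0 by
            by_cases h : x = Sum.inr () <;> simp [h])]
          rw [Finset.sum_ite_eq' univ _ _]
          simp
        · rw [Finset.mul_sum]
          exact Finset.sum_congr rfl fun x _ => by ring
      rw [hexp]
      ring
  rw [stepA, Finset.sum_product]
  simp_rw [← Finset.mul_sum, char_sum_vec ψ hψ, mul_ite, mul_zero, ← Finset.sum_filter]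
  have hfil : (univ.filter (fun M : Matrix (κ ⊕ Unit) (κ ⊕ Unit) F => IsUnit M)).filter
      (fun M => ∀ x, (if x = Sum.inr () then (1:F) else 0) - a * M⁻¹ (Sum.inr ()) x = 0)
      = univ.filter (fun M : Matrix (κ ⊕ Unit) (κ ⊕ Unit) F =>
          IsUnit M ∧ ∀ j, M (Sum.inr ()) j = if j = Sum.inr () then a else 0) := by
    rw [Finset.filter_filter]
    refine Finset.filter_congr fun M _ => ?_
    constructor
    · rintro ⟨h1, h2⟩; exact ⟨h1, (cond_iff_row a ha M h1).1 h2⟩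
    · rintro ⟨h1, h2⟩; exact ⟨h1, (cond_iff_row a ha M h1).2 h2⟩
  rw [hfil]
  rw [← Finset.sum_mul, stepD ψ a ha]
  rw [show Fintype.card (κ ⊕ Unit) = Fintype.card κ + 1 by simp]
  ring
end fib0b

section big
variable {κ : Type} [Fintype κ] [DecidableEq κ]

lemma card_zeroRow : (univ.filter (fun ρ : ((κ ⊕ Unit) ⊕ Unit) → F =>
    ∀ j : κ ⊕ Unit, ρ (Sum.inl j) = 0)).card = Fintype.card F := by
  rw [← Finset.card_univ]
  refine Finset.card_nbij' (fun ρ => ρ (Sum.inr ()))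
    (fun d => Sum.elim (fun _ => 0) (fun _ => d)) ?_ ?_ ?_ ?_
  · exact fun ρ _ => Finset.mem_univ _
  · intro d _
    simp only [Finset.mem_coe, Finset.mem_filter, Finset.mem_univ, true_and]
    exact fun j => rfl
  · intro ρ hρ
    simp only [Finset.mem_coe, Finset.mem_filter, Finset.mem_univ, true_and] at hρ
    funext x
    rcases x with j | u
    · exact (hρ j).symm
    · cases u; rfl
  · intro d _
    rfl

lemma card_T : (univ.filter (fun ρ : ((κ ⊕ Unit) ⊕ Unit) → F =>
    ∃ j : κ ⊕ Unit, ρ (Sum.inl j) ≠ 0)).card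
    = Fintype.card F ^ (Fintype.card κ + 2) - Fintype.card F := by
  have h1 : (univ.filter (fun ρ : ((κ ⊕ Unit) ⊕ Unit) → F => ∃ j : κ ⊕ Unit, ρ (Sum.inl j) ≠ 0))
      = univ \ (univ.filter (fun ρ : ((κ ⊕ Unit) ⊕ Unit) → F =>
        ∀ j : κ ⊕ Unit, ρ (Sum.inl j) = 0)) := by
    rw [← Finset.filter_not]
    refine Finset.filter_congr fun ρ _ => ?_
    push_neg
    rfl
  rw [h1, Finset.card_sdiff_of_subset (Finset.filter_subset _ _), card_zeroRow, Finset.card_univ]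
  congr 1
  simp [Fintype.card_fun]

set_option maxHeartbeats 1000000 in
lemma bigCell (ψ : AddChar F ℂ) (hψ : ψ ≠ 1) (a : F) (ha : a ≠ 0) :
    ∑ g ∈ univ.filter (fun g : Matrix ((κ ⊕ Unit) ⊕ Unit) ((κ ⊕ Unit) ⊕ Unit) F =>
        IsUnit g ∧ ¬∀ j : κ ⊕ Unit, g (Sum.inr ()) (Sum.inl j) = 0),
      ψ (g.trace + a * (g⁻¹).trace)
    = ((Fintype.card F : ℂ) ^ (Fintype.card κ + 2) - (Fintype.card F : ℂ)) *
        ((Fintype.card F : ℂ) ^ (Fintype.card κ + 1) *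
          ((Fintype.card F : ℂ) ^ (Fintype.card κ) * kk ψ a κ)) := by
  rw [← Finset.sum_fiberwise_of_maps_to (g := fun g => g (Sum.inr ()))
    (t := univ.filter (fun ρ : ((κ ⊕ Unit) ⊕ Unit) → F => ∃ j : κ ⊕ Unit, ρ (Sum.inl j) ≠ 0))
    (fun g hg => by
      simp only [Finset.mem_filter, Finset.mem_univ, true_and] at hg ⊢
      push_neg at hg
      exact hg.2)]
  have hinner : ∀ ρ ∈ univ.filter (fun ρ : ((κ ⊕ Unit) ⊕ Unit) → F =>
      ∃ j : κ ⊕ Unit, ρ (Sum.inl j) ≠ 0),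
      ∑ g ∈ (univ.filter (fun g : Matrix ((κ ⊕ Unit) ⊕ Unit) ((κ ⊕ Unit) ⊕ Unit) F =>
          IsUnit g ∧ ¬∀ j : κ ⊕ Unit, g (Sum.inr ()) (Sum.inl j) = 0)).filter
            (fun g => g (Sum.inr ()) = ρ),
        ψ (g.trace + a * (g⁻¹).trace)
      = (Fintype.card F : ℂ) ^ (Fintype.card κ + 1) *
          ((Fintype.card F : ℂ) ^ (Fintype.card κ) * kk ψ a κ) := by
    intro ρ hρ
    simp only [Finset.mem_filter, Finset.mem_univ, true_and] at hρ
    have hset : (univ.filter (fun g : Matrix ((κ ⊕ Unit) ⊕ Unit) ((κ ⊕ Unit) ⊕ Unit) F =>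
        IsUnit g ∧ ¬∀ j : κ ⊕ Unit, g (Sum.inr ()) (Sum.inl j) = 0)).filter
          (fun g => g (Sum.inr ()) = ρ)
        = univ.filter (fun g : Matrix ((κ ⊕ Unit) ⊕ Unit) ((κ ⊕ Unit) ⊕ Unit) F =>
            IsUnit g ∧ g (Sum.inr ()) = ρ) := by
      ext g
      simp only [Finset.mem_filter, Finset.mem_univ, true_and]
      constructor
      · rintro ⟨⟨h1, _⟩, h3⟩; exact ⟨h1, h3⟩
      · rintro ⟨h1, h3⟩
        refine ⟨⟨h1, fun hall => ?_⟩, h3⟩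
        obtain ⟨j, hj⟩ := hρ
        exact hj (by rw [← h3]; exact hall j)
    rw [hset, fiberEq ψ a ρ (Sum.inr ()) hρ, fib0 ψ hψ a ha]
  rw [Finset.sum_congr rfl hinner, Finset.sum_const, card_T, nsmul_eq_mul]
  have h1 : (1:ℕ) ≤ Fintype.card F := Fintype.card_pos
  rw [Nat.cast_sub (le_trans (Nat.le_refl _) (Nat.le_self_pow (by omega) _))]
  push_cast
  ring
end big

section mainrec
variable {κ : Type} [Fintype κ] [DecidableEq κ]

set_option maxHeartbeats 1000000 in
lemma mainrec (ψ : AddChar F ℂ) (hψ : ψ ≠ 1) (a : F) (ha : a ≠ 0) :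
    kk ψ a ((κ ⊕ Unit) ⊕ Unit)
    = (Fintype.card F : ℂ) ^ (Fintype.card κ + 1) * kk ψ a (κ ⊕ Unit) *
        (∑ x ∈ (univ \ {0} : Finset F), ψ (x + a * x⁻¹)) +
      (Fintype.card F : ℂ) ^ (2 * Fintype.card κ + 2) *
        ((Fintype.card F : ℂ) ^ (Fintype.card κ + 1) - 1) * kk ψ a κ := by
  rw [kk]
  rw [← Finset.sum_filter_add_sum_filter_not (univ.filter
    (fun g : Matrix ((κ ⊕ Unit) ⊕ Unit) ((κ ⊕ Unit) ⊕ Unit) F => IsUnit g))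
    (fun g => ∀ j : κ ⊕ Unit, g (Sum.inr ()) (Sum.inl j) = 0)]
  have e1 : (univ.filter (fun g : Matrix ((κ ⊕ Unit) ⊕ Unit) ((κ ⊕ Unit) ⊕ Unit) F =>
      IsUnit g)).filter (fun g => ∀ j : κ ⊕ Unit, g (Sum.inr ()) (Sum.inl j) = 0)
      = univ.filter (fun g : Matrix ((κ ⊕ Unit) ⊕ Unit) ((κ ⊕ Unit) ⊕ Unit) F =>
          IsUnit g ∧ ∀ j : κ ⊕ Unit, g (Sum.inr ()) (Sum.inl j) = 0) := by
    ext g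
    simp only [Finset.mem_filter, Finset.mem_univ, true_and]
  have e2 : (univ.filter (fun g : Matrix ((κ ⊕ Unit) ⊕ Unit) ((κ ⊕ Unit) ⊕ Unit) F =>
      IsUnit g)).filter (fun g => ¬∀ j : κ ⊕ Unit, g (Sum.inr ()) (Sum.inl j) = 0)
      = univ.filter (fun g : Matrix ((κ ⊕ Unit) ⊕ Unit) ((κ ⊕ Unit) ⊕ Unit) F =>
          IsUnit g ∧ ¬∀ j : κ ⊕ Unit, g (Sum.inr ()) (Sum.inl j) = 0) := by
    ext g
    simp only [Finset.mem_filter, Finset.mem_univ, true_and]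
  rw [e1, e2, smallCell ψ a, bigCell ψ hψ a ha]
  rw [show Fintype.card (κ ⊕ Unit) = Fintype.card κ + 1 by simp]
  ring
end mainrec

lemma KGL_eq_kk' (p r : ℕ) [Fact p.Prime] (ψ : AddChar (GaloisField p r) ℂ)
    (t : ℕ) (a : GaloisField p r) : KGL p r ψ t a = kk ψ a (Fin t) := by
  rw [KGL, kk]
  refine Finset.sum_bij (fun u _ => (u : Matrix (Fin t) (Fin t) (GaloisField p r))) ?_ ?_ ?_ ?_
  · intro u _; simp [Finset.mem_filter]
  · intro u _ v _ h; exact Units.ext h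
  · intro g hg
    simp only [Finset.mem_filter, Finset.mem_univ, true_and] at hg
    exact ⟨hg.unit, Finset.mem_univ _, rfl⟩
  · intro u _
    rw [Matrix.coe_units_inv]


theorem stmt5 (p r : ℕ) [Fact p.Prime] (hr : 1 ≤ r)
    (ψ : AddChar (GaloisField p r) ℂ) (hψ : ψ ≠ 1)
    (a : GaloisField p r) (ha : a ≠ 0) (t : ℕ) (ht : 2 ≤ t) :
    KGL p r ψ t a =
      ((p : ℂ) ^ r) ^ (t - 1) * KGL p r ψ (t - 1) a *
        (∑ x ∈ (Finset.univ \ {0} : Finset (GaloisField p r)), ψ (x + a * x⁻¹)) +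
      ((p : ℂ) ^ r) ^ (2 * t - 2) * (((p : ℂ) ^ r) ^ (t - 1) - 1) * KGL p r ψ (t - 2) a := by
  obtain ⟨n, rfl⟩ : ∃ n, t = n + 2 := ⟨t - 2, by omega⟩
  have hq : ((Fintype.card (GaloisField p r) : ℕ) : ℂ) = ((p : ℂ) ^ r) := by
    rw [← Nat.card_eq_fintype_card, GaloisField.card p r (by omega)]
    push_cast
    rfl
  have e2 : ((Fin n ⊕ Unit) ⊕ Unit) ≃ Fin (n + 2) := by
    refine Equiv.trans (Equiv.sumCongr (Equiv.sumCongr (Equiv.refl (Fin n)) finOneEquiv.symm)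
      finOneEquiv.symm) ?_
    exact Equiv.trans (Equiv.sumCongr finSumFinEquiv (Equiv.refl (Fin 1))) finSumFinEquiv
  have e1 : (Fin n ⊕ Unit) ≃ Fin (n + 1) :=
    Equiv.trans (Equiv.sumCongr (Equiv.refl (Fin n)) finOneEquiv.symm) finSumFinEquiv
  have h2 : KGL p r ψ (n + 2) a = kk ψ a ((Fin n ⊕ Unit) ⊕ Unit) := by
    rw [KGL_eq_kk', kk_congr ψ a e2]
  have h1 : KGL p r ψ (n + 2 - 1) a = kk ψ a (Fin n ⊕ Unit) := by
    rw [show n + 2 - 1 = n + 1 from rfl, KGL_eq_kk', kk_congr ψ a e1]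
  have h0 : KGL p r ψ (n + 2 - 2) a = kk ψ a (Fin n) := by
    rw [show n + 2 - 2 = n from rfl, KGL_eq_kk']
  rw [h2, h1, h0, mainrec ψ hψ a ha]
  rw [Fintype.card_fin, ← hq]
  rw [show n + 2 - 1 = n + 1 from rfl, show 2 * (n + 2) - 2 = 2 * n + 2 by omega]
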